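/- Suppose X, Y ⊂ [0,1] satisfy: (a) the Fourier decay bound |K_X(y)| ≤ C h^{β_F/2−δ}|y|^{−β_F/2} for all h ≤ |y| ≤ 2, with 0 < β_F ≤ δ; (b) vol(Y ∩ I) ≤ C h^{1−δ}|I|^δ for every interval I with h ≤ |I| ≤ 2; (c) sup|K_X| ≤ C h^{−δ}. Then ‖1_X F_h 1_Y‖_{L²→L²} ≤ C' h^{1/2 − δ + β_F/4} for a constant C' depending only on C, δ, β_F. -/

import Mathlib

open MeasureTheory Complex
open scoped ENNReal NNReal

/-- The unitary semiclassical Fourier transform. -/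
noncomputable def semiFT (h : ℝ) (f : ℝ → ℂ) (ξ : ℝ) : ℂ :=
  (((2 * Real.pi * h) ^ (-(1/2) : ℝ) : ℝ) : ℂ) *
    ∫ x : ℝ, Complex.exp (-(Complex.I * (x : ℂ) * (ξ : ℂ)) / (h : ℂ)) * f x

/-- `K_X(y) = (2πh)^{-1} ∫_X e^{ixy/h} dx`, the rescaled Fourier transform of `1_X`. -/
noncomputable def Kx (h : ℝ) (X : Set ℝ) (y : ℝ) : ℂ :=
  (((2 * Real.pi * h)⁻¹ : ℝ) : ℂ) *
    ∫ x in X, Complex.exp (Complex.I * (x : ℂ) * (y : ℂ) / (h : ℂ))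

lemma Kx_sm (h : ℝ) (X : Set ℝ) : StronglyMeasurable (Kx h X) := by
  have h1 : StronglyMeasurable fun y : ℝ => ∫ x in X, Complex.exp (Complex.I * x * y / h) := by
    apply StronglyMeasurable.integral_prod_right
      (f := fun (y : ℝ) (x : ℝ) => Complex.exp (Complex.I * x * y / h))
    apply Continuous.stronglyMeasurable
    exact Complex.continuous_exp.comp (by fun_prop)
  exact stronglyMeasurable_const.mul h1

lemma Kx_neg_norm (h : ℝ) (X : Set ℝ) (y : ℝ) : ‖Kx h X (-y)‖ = ‖Kx h X y‖ := by
  have h2 : ∫ x in X, (starRingEnd ℂ) (Complex.exp (Complex.I * x * y / h))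
      = (starRingEnd ℂ) (∫ x in X, Complex.exp (Complex.I * x * y / h)) := integral_conj
  have : Kx h X (-y) = starRingEnd ℂ (Kx h X y) := by
    unfold Kx
    rw [map_mul, Complex.conj_ofReal, ← h2]
    refine congrArg _ (integral_congr_ae (Filter.Eventually.of_forall fun x => ?_))
    show Complex.exp _ = (starRingEnd ℂ) (Complex.exp _)
    rw [← Complex.exp_conj]
    congr 1
    simp [map_div₀, Complex.conj_ofReal, Complex.conj_I]
  rw [this, RCLike.norm_conj]

lemma semiFT_sm (h : ℝ) (g : ℝ → ℂ) (hg : StronglyMeasurable g) :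
    StronglyMeasurable (semiFT h g) := by
  have h1 : StronglyMeasurable fun ξ : ℝ =>
      ∫ x : ℝ, Complex.exp (-(Complex.I * x * ξ) / h) * g x := by
    apply StronglyMeasurable.integral_prod_right
      (f := fun (ξ : ℝ) (x : ℝ) => Complex.exp (-(Complex.I * x * ξ) / h) * g x)
    apply StronglyMeasurable.mul _ (hg.comp_measurable measurable_snd)
    apply Continuous.stronglyMeasurable
    exact Complex.continuous_exp.comp (by fun_prop)
  exact stronglyMeasurable_const.mul h1

open scoped Real in
lemma kernel_id (h : ℝ) (hh : 0 < h) (X : Set ℝ) (hX : MeasurableSet X)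
    (hXb : X ⊆ Set.Icc 0 1) (g : ℝ → ℂ) (hgm : StronglyMeasurable g) (hgi : Integrable g) :
    ∫ ξ in X, (semiFT h g ξ) * (starRingEnd ℂ) (semiFT h g ξ)
      = ∫ p : ℝ × ℝ, Kx h X (p.2 - p.1) * (g p.1 * (starRingEnd ℂ) (g p.2))
          ∂((volume : Measure ℝ).prod (volume : Measure ℝ)) := by
  classical
  have h2πh : (0:ℝ) < 2 * Real.pi * h := by positivity
  set cR : ℝ := (2 * Real.pi * h) ^ (-(1/2) : ℝ) with hcR
  haveI : IsFiniteMeasure ((volume : Measure ℝ).restrict X) := ⟨by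
    rw [Measure.restrict_apply_univ]
    exact (measure_mono hXb).trans_lt measure_Icc_lt_top⟩
  have hcsq : (cR : ℂ) * (cR : ℂ) = (((2 * Real.pi * h)⁻¹ : ℝ) : ℂ) := by
    rw [← Complex.ofReal_mul]
    congr 1
    rw [hcR, ← Real.rpow_add h2πh, show (-(1/2) + -(1/2) : ℝ) = -1 by norm_num,
      Real.rpow_neg_one]
  -- pointwise expansion of |semiFT g ξ|²
  have hpt : ∀ ξ : ℝ, semiFT h g ξ * (starRingEnd ℂ) (semiFT h g ξ)
      = ∫ p : ℝ × ℝ, (cR:ℂ) * (cR:ℂ) *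
          ((Complex.exp (-(Complex.I * p.1 * ξ) / h) * g p.1) *
            (starRingEnd ℂ) (Complex.exp (-(Complex.I * p.2 * ξ) / h) * g p.2))
          ∂((volume : Measure ℝ).prod (volume : Measure ℝ)) := by
    intro ξ
    have hconjint : ∫ x : ℝ, (starRingEnd ℂ) (Complex.exp (-(Complex.I * x * ξ) / h) * g x)
        = (starRingEnd ℂ) (∫ x : ℝ, Complex.exp (-(Complex.I * x * ξ) / h) * g x) :=
      integral_conj
    have hprod := integral_prod_mul (μ := (volume : Measure ℝ)) (ν := (volume : Measure ℝ))
      (f := fun x : ℝ => Complex.exp (-(Complex.I * x * ξ) / h) * g x)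
      (g := fun x : ℝ => (starRingEnd ℂ) (Complex.exp (-(Complex.I * x * ξ) / h) * g x))
    rw [integral_const_mul, hprod, hconjint, semiFT, map_mul, Complex.conj_ofReal]
    ring
  rw [integral_congr_ae (Filter.Eventually.of_forall fun ξ => hpt ξ)]
  -- integrability on the product for Fubini
  have hmaj : Integrable (fun q : ℝ × (ℝ × ℝ) => ‖g q.2.1‖ * ‖g q.2.2‖)
      (((volume : Measure ℝ).restrict X).prod
        ((volume : Measure ℝ).prod (volume : Measure ℝ))) := by
    have h1 : Integrable (fun p : ℝ × ℝ => ‖g p.1‖ * ‖g p.2‖)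
        ((volume : Measure ℝ).prod (volume : Measure ℝ)) :=
      hgi.norm.mul_prod hgi.norm
    simpa using (integrable_const (1:ℝ)).mul_prod h1
  have hexp : ∀ (x ξ : ℝ), ‖Complex.exp (-(Complex.I * x * ξ) / h)‖ = 1 := by
    intro x ξ
    rw [Complex.norm_exp]
    have : ((-(Complex.I * x * ξ) / h : ℂ)).re = 0 := by
      simp [Complex.div_re]
    rw [this, Real.exp_zero]
  have hFint : Integrable
      (Function.uncurry fun (ξ : ℝ) (p : ℝ × ℝ) => (cR:ℂ) * (cR:ℂ) *
          ((Complex.exp (-(Complex.I * p.1 * ξ) / h) * g p.1) *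
            (starRingEnd ℂ) (Complex.exp (-(Complex.I * p.2 * ξ) / h) * g p.2)))
      (((volume : Measure ℝ).restrict X).prod
        ((volume : Measure ℝ).prod (volume : Measure ℝ))) := by
    refine Integrable.mono' (hmaj.const_mul (cR * cR)) ?_
      (Filter.Eventually.of_forall fun q => ?_)
    · apply AEStronglyMeasurable.mul aestronglyMeasurable_const
      apply AEStronglyMeasurable.mul
      · exact (((Complex.continuous_exp.comp (by fun_prop)).stronglyMeasurable.mul
          (hgm.comp_measurable (by fun_prop))).aestronglyMeasurable)
      · apply Continuous.comp_aestronglyMeasurable continuous_star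
        exact (((Complex.continuous_exp.comp (by fun_prop)).stronglyMeasurable.mul
          (hgm.comp_measurable (by fun_prop))).aestronglyMeasurable)
    · have hcnn : (0:ℝ) ≤ cR := Real.rpow_nonneg (by positivity) _
      refine le_of_eq ?_
      simp only [Function.uncurry, norm_mul, RCLike.norm_conj, hexp, one_mul,
        Complex.norm_real, Real.norm_eq_abs, _root_.abs_of_nonneg hcnn]
  rw [integral_integral_swap hFint]
  -- inner integral computation
  refine integral_congr_ae (Filter.Eventually.of_forall fun p => ?_)
  dsimp only
  have hcomb : ∀ ξ : ℝ, (cR:ℂ) * (cR:ℂ) *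
      ((Complex.exp (-(Complex.I * p.1 * ξ) / h) * g p.1) *
        (starRingEnd ℂ) (Complex.exp (-(Complex.I * p.2 * ξ) / h) * g p.2))
      = ((cR:ℂ) * (cR:ℂ) * (g p.1 * (starRingEnd ℂ) (g p.2))) *
          Complex.exp (Complex.I * ξ * (((p.2 - p.1 : ℝ) : ℝ) : ℂ) / h) := by
    intro ξ
    rw [map_mul, ← Complex.exp_conj]
    have hconj : (starRingEnd ℂ) (-(Complex.I * p.2 * ξ) / h) = Complex.I * p.2 * ξ / h := by
      simp [map_div₀, Complex.conj_ofReal, Complex.conj_I]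
    rw [hconj]
    have hne : (h : ℂ) ≠ 0 := by exact_mod_cast hh.ne'
    have hE : Complex.exp (-(Complex.I * p.1 * ξ) / h) * Complex.exp (Complex.I * p.2 * ξ / h)
        = Complex.exp (Complex.I * ξ * (((p.2 - p.1 : ℝ) : ℝ) : ℂ) / h) := by
      rw [← Complex.exp_add]
      congr 1
      have hne2 : (h : ℂ) ≠ 0 := hne
      push_cast
      field_simp
      ring
    rw [← hE]
    ring
  rw [integral_congr_ae (Filter.Eventually.of_forall fun ξ => hcomb ξ)]
  rw [integral_const_mul]
  have hKint : ∫ ξ in X, Complex.exp (Complex.I * ξ * (((p.2 - p.1 : ℝ)) : ℂ) / h)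
      = (((2 * Real.pi * h : ℝ)) : ℂ) * Kx h X (p.2 - p.1) := by
    rw [Kx, ← mul_assoc, ← Complex.ofReal_mul, mul_inv_cancel₀ h2πh.ne', Complex.ofReal_one,
      one_mul]
  rw [hKint, hcsq]
  rw [← mul_assoc, mul_comm (((((2 * Real.pi * h)⁻¹ : ℝ)) : ℂ) * _)]
  rw [← mul_assoc, ← Complex.ofReal_mul, mul_inv_cancel₀ h2πh.ne', Complex.ofReal_one, one_mul]
  ring

lemma integrable_conj' {g : ℝ → ℂ} {μ : Measure ℝ} (hg : Integrable g μ) :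
    Integrable (fun x => (starRingEnd ℂ) (g x)) μ := by
  refine hg.norm.mono' (Continuous.comp_aestronglyMeasurable continuous_star
    hg.aestronglyMeasurable) (Filter.Eventually.of_forall fun x => ?_)
  simp

lemma schur_bound (h : ℝ) (X Y : Set ℝ) (hY : MeasurableSet Y) (hYb : Y ⊆ Set.Icc 0 1)
    (f : ℝ → ℂ) (hfm : StronglyMeasurable f) (hf2 : MemLp f 2 volume)
    (M B : ℝ) (hM0 : 0 ≤ M)
    (hbdd : ∀ y, ‖Kx h X y‖ ≤ B)
    (HM : ∀ z ∈ Y, ∫ w in Y, ‖Kx h X (w - z)‖ ≤ M) :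
    ‖∫ p : ℝ × ℝ, Kx h X (p.2 - p.1) *
        (Y.indicator f p.1 * (starRingEnd ℂ) (Y.indicator f p.2))
        ∂((volume : Measure ℝ).prod (volume : Measure ℝ))‖
      ≤ M * ∫ x, ‖Y.indicator f x‖ ^ 2 := by
  classical
  set g : ℝ → ℂ := Y.indicator f with hg
  have hYfin : volume Y < ⊤ := (measure_mono hYb).trans_lt measure_Icc_lt_top
  haveI : IsFiniteMeasure ((volume : Measure ℝ).restrict Y) := ⟨by
    rw [Measure.restrict_apply_univ]; exact hYfin⟩
  have hgm : StronglyMeasurable g := hfm.indicator hY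
  have hgi : Integrable g volume := by
    rw [hg, integrable_indicator_iff hY]
    exact ((hf2.restrict Y).integrable (by norm_num) :)
  -- auxiliary functions
  set n : ℝ → ℝ := fun x => ‖g x‖ with hn
  set i : ℝ → ℝ := Y.indicator (fun _ => (1:ℝ)) with hi
  have hn_indicator : ∀ x, x ∉ Y → n x = 0 := by
    intro x hx; simp [hn, hg, Set.indicator_of_notMem hx]
  have hi_mem : ∀ x, x ∈ Y → i x = 1 := fun x hx => Set.indicator_of_mem hx _
  have hi_nmem : ∀ x, x ∉ Y → i x = 0 := fun x hx => Set.indicator_of_notMem hx _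
  -- kernel function
  set k : ℝ × ℝ → ℝ := fun p => ‖Kx h X (p.2 - p.1)‖ with hk
  have hknn : ∀ p, 0 ≤ k p := fun p => norm_nonneg _
  have hBnn : 0 ≤ B := le_trans (norm_nonneg _) (hbdd 0)
  have hksm : StronglyMeasurable k :=
    ((Kx_sm h X).comp_measurable (measurable_snd.sub measurable_fst)).norm
  -- integrability facts
  have hn2 : Integrable (fun x => n x ^ 2) volume := by
    have := hf2.integrable_norm_rpow two_ne_zero ENNReal.ofNat_ne_top
    have h2 : Integrable (fun x => ‖f x‖ ^ 2) volume := by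
      simpa [ENNReal.toReal_ofNat, Real.rpow_natCast] using this
    have h3 : Integrable (Y.indicator fun x => ‖f x‖ ^ 2) volume :=
      h2.indicator hY
    refine h3.congr (Filter.Eventually.of_forall fun x => ?_)
    by_cases hx : x ∈ Y <;>
      simp [hn, hg, Set.indicator_of_mem, Set.indicator_of_notMem, hx]
  have hii : Integrable i volume := by
    rw [hi, integrable_indicator_iff hY]
    exact integrableOn_const hYfin.ne
  have hT1 : Integrable (fun p : ℝ × ℝ => k p * (n p.1 ^ 2 * i p.2))
      ((volume : Measure ℝ).prod (volume : Measure ℝ)) := by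
    refine Integrable.bdd_mul (hn2.mul_prod hii) hksm.aestronglyMeasurable (c := B) (Filter.Eventually.of_forall fun p => ?_)
    simpa [hk] using (hbdd (p.2 - p.1))
  have hT2 : Integrable (fun p : ℝ × ℝ => k p * (i p.1 * n p.2 ^ 2))
      ((volume : Measure ℝ).prod (volume : Measure ℝ)) := by
    refine Integrable.bdd_mul (hii.mul_prod hn2) hksm.aestronglyMeasurable (c := B) (Filter.Eventually.of_forall fun p => ?_)
    simpa [hk] using (hbdd (p.2 - p.1))
  have hF : Integrable (fun p : ℝ × ℝ => Kx h X (p.2 - p.1) *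
      (g p.1 * (starRingEnd ℂ) (g p.2)))
      ((volume : Measure ℝ).prod (volume : Measure ℝ)) := by
    refine Integrable.bdd_mul (hgi.mul_prod (integrable_conj' hgi))
      ((Kx_sm h X).comp_measurable (measurable_snd.sub measurable_fst)).aestronglyMeasurable
      (c := B) (Filter.Eventually.of_forall fun p => hbdd _)
  -- pointwise bound
  have hptw : ∀ p : ℝ × ℝ, ‖Kx h X (p.2 - p.1) * (g p.1 * (starRingEnd ℂ) (g p.2))‖
      ≤ (1/2) * (k p * (n p.1 ^ 2 * i p.2) + k p * (i p.1 * n p.2 ^ 2)) := by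
    intro p
    rw [norm_mul, norm_mul, RCLike.norm_conj]
    by_cases h1 : p.1 ∈ Y
    · by_cases h2 : p.2 ∈ Y
      · rw [hi_mem _ h1, hi_mem _ h2]
        have := hknn p
        nlinarith [sq_nonneg (n p.1 - n p.2), hknn p]
      · rw [show ‖g p.2‖ = 0 by simp [hg, Set.indicator_of_notMem h2]]
        rw [hi_mem _ h1, hi_nmem _ h2]
        have h3 := hn_indicator _ h2
        simp only [h3]
        have := hknn p
        nlinarith
    · rw [show ‖g p.1‖ = 0 by simp [hg, Set.indicator_of_notMem h1]]
      rw [hi_nmem _ h1]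
      have h3 := hn_indicator _ h1
      simp only [h3]
      have := hknn p
      nlinarith [sq_nonneg (n p.2)]
  -- bound T1 integral
  have hinner1 : ∀ x : ℝ, ∫ x' : ℝ, k (x, x') * (n x ^ 2 * i x')
      = n x ^ 2 * ∫ x', ‖Kx h X (x' - x)‖ * i x' := by
    intro x
    rw [← integral_const_mul]
    congr 1; ext x'; simp only [hk]; ring
  have hIto : ∀ x : ℝ, (∫ x' : ℝ, ‖Kx h X (x' - x)‖ * i x') = ∫ x' in Y, ‖Kx h X (x' - x)‖ := by
    intro x
    rw [← integral_indicator hY]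
    congr 1; ext x'
    by_cases hx' : x' ∈ Y <;>
      simp [hi, Set.indicator_of_mem, Set.indicator_of_notMem, hx']
  have hmarg1 : Integrable (fun x => ∫ x', k (x, x') * (n x ^ 2 * i x')) volume :=
    hT1.integral_prod_left
  have hbound1 : (∫ p : ℝ × ℝ, k p * (n p.1 ^ 2 * i p.2)
      ∂((volume : Measure ℝ).prod (volume : Measure ℝ))) ≤ M * ∫ x, n x ^ 2 := by
    rw [integral_prod _ hT1]
    have hle : ∀ x : ℝ, (∫ x', k (x, x') * (n x ^ 2 * i x')) ≤ n x ^ 2 * M := by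
      intro x
      rw [hinner1 x, hIto x]
      by_cases hx : x ∈ Y
      · exact mul_le_mul_of_nonneg_left (HM x hx) (sq_nonneg _)
      · rw [hn_indicator _ hx]; simp
    calc (∫ x, ∫ x', k (x, x') * (n x ^ 2 * i x'))
        ≤ ∫ x, n x ^ 2 * M := integral_mono hmarg1 (hn2.mul_const M) hle
      _ = M * ∫ x, n x ^ 2 := by rw [integral_mul_const]; ring
  -- bound T2 integral
  have hbound2 : (∫ p : ℝ × ℝ, k p * (i p.1 * n p.2 ^ 2)
      ∂((volume : Measure ℝ).prod (volume : Measure ℝ))) ≤ M * ∫ x, n x ^ 2 := by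
    rw [integral_prod_symm _ hT2]
    have hmarg2 : Integrable (fun y => ∫ x, k (x, y) * (i x * n y ^ 2)) volume :=
      hT2.integral_prod_right
    have hle : ∀ y : ℝ, (∫ x, k (x, y) * (i x * n y ^ 2)) ≤ n y ^ 2 * M := by
      intro y
      have : (∫ x, k (x, y) * (i x * n y ^ 2)) = n y ^ 2 * ∫ x, ‖Kx h X (y - x)‖ * i x := by
        rw [← integral_const_mul]
        congr 1; ext x; simp only [hk]
        rw [show ‖Kx h X (y - x)‖ = ‖Kx h X (x - y)‖ by
          rw [show (y - x : ℝ) = -(x - y) by ring, Kx_neg_norm]]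
        ring
      rw [this]
      have hIto2 : (∫ x, ‖Kx h X (y - x)‖ * i x) = ∫ x in Y, ‖Kx h X (y - x)‖ := by
        rw [← integral_indicator hY]
        congr 1; ext x
        by_cases hx : x ∈ Y <;>
          simp [hi, Set.indicator_of_mem, Set.indicator_of_notMem, hx]
      rw [hIto2]
      by_cases hy : y ∈ Y
      · have : (∫ x in Y, ‖Kx h X (y - x)‖) = ∫ x in Y, ‖Kx h X (x - y)‖ := by
          refine integral_congr_ae (Filter.Eventually.of_forall fun x => ?_)
          show ‖Kx h X (y - x)‖ = ‖Kx h X (x - y)‖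
          rw [show (y - x : ℝ) = -(x - y) by ring, Kx_neg_norm]
        rw [this]
        exact mul_le_mul_of_nonneg_left (HM y hy) (sq_nonneg _)
      · rw [hn_indicator _ hy]; simp
    calc (∫ y, ∫ x, k (x, y) * (i x * n y ^ 2))
        ≤ ∫ y, n y ^ 2 * M := integral_mono hmarg2 (hn2.mul_const M) hle
      _ = M * ∫ x, n x ^ 2 := by rw [integral_mul_const]; ring
  -- combine
  calc ‖∫ p : ℝ × ℝ, Kx h X (p.2 - p.1) * (g p.1 * (starRingEnd ℂ) (g p.2))
        ∂((volume : Measure ℝ).prod (volume : Measure ℝ))‖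
      ≤ ∫ p : ℝ × ℝ, ‖Kx h X (p.2 - p.1) * (g p.1 * (starRingEnd ℂ) (g p.2))‖
        ∂((volume : Measure ℝ).prod (volume : Measure ℝ)) := norm_integral_le_integral_norm _
    _ ≤ ∫ p : ℝ × ℝ, (1/2) * (k p * (n p.1 ^ 2 * i p.2) + k p * (i p.1 * n p.2 ^ 2))
        ∂((volume : Measure ℝ).prod (volume : Measure ℝ)) :=
        integral_mono hF.norm ((hT1.add hT2).const_mul _) hptw
    _ = (1/2) * ((∫ p : ℝ × ℝ, k p * (n p.1 ^ 2 * i p.2)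
          ∂((volume : Measure ℝ).prod (volume : Measure ℝ)))
        + ∫ p : ℝ × ℝ, k p * (i p.1 * n p.2 ^ 2)
          ∂((volume : Measure ℝ).prod (volume : Measure ℝ))) := by
        rw [integral_const_mul, integral_add hT1 hT2]
    _ ≤ (1/2) * ((M * ∫ x, n x ^ 2) + (M * ∫ x, n x ^ 2)) := by
        have := hbound1; have := hbound2
        nlinarith [hbound1, hbound2]
    _ = M * ∫ x, n x ^ 2 := by ring

lemma exists_pow_between (a : ℝ) (ha : 1 ≤ a) : ∃ N : ℕ, a ≤ 2 ^ N ∧ (2:ℝ) ^ N ≤ 2 * a := by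
  classical
  have hex : ∃ n : ℕ, a ≤ 2 ^ n := by
    obtain ⟨n, hn⟩ := pow_unbounded_of_one_lt a one_lt_two
    exact ⟨n, hn.le⟩
  set N := Nat.find hex with hN
  refine ⟨N, Nat.find_spec hex, ?_⟩
  rcases Nat.eq_zero_or_pos N with h0 | hpos
  · rw [h0]; simpa using by linarith
  · have hmin : ¬ (a ≤ 2 ^ (N - 1)) := Nat.find_min hex (Nat.pred_lt hpos.ne')
    push_neg at hmin
    have : (2:ℝ) ^ N = 2 * 2 ^ (N - 1) := by
      rw [← pow_succ']
      congr 1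
      omega
    rw [this]
    nlinarith

set_option maxHeartbeats 1600000 in
lemma Mbound (C δ βF h : ℝ) (hC : 0 < C) (hδ0 : 0 < δ) (hδ1 : δ < 1) (hβ0 : 0 < βF)
    (hβδ : βF ≤ δ) (hh : 0 < h) (h1 : h ≤ 1)
    (X Y : Set ℝ) (hY : MeasurableSet Y) (hYb : Y ⊆ Set.Icc 0 1)
    (hdecay : ∀ y : ℝ, h ≤ |y| → |y| ≤ 2 →
      ‖Kx h X y‖ ≤ C * h ^ (βF/2 - δ) * |y| ^ (-(βF/2) : ℝ))
    (hreg : ∀ a b : ℝ, a < b → h ≤ b - a → b - a ≤ 2 →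
        (volume (Y ∩ Set.Icc a b)).toReal ≤ C * h ^ (1 - δ) * (b - a) ^ δ)
    (hsup : ∀ y : ℝ, ‖Kx h X y‖ ≤ C * h ^ (-δ : ℝ)) :
    ∀ z ∈ Set.Icc (0:ℝ) 1, ∫ w in Y, ‖Kx h X (w - z)‖
      ≤ ((2:ℝ) ^ δ + 4 ^ δ * 4 ^ (δ - βF/2) / ((2:ℝ) ^ (δ - βF/2) - 1)) * C ^ 2
          * h ^ (1 - 2*δ + βF/2) := by
  classical
  rintro z ⟨hz0, hz1⟩
  set e : ℝ := δ - βF/2 with he_def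
  have he : 0 < e := by rw [he_def]; linarith
  set r : ℝ := h ^ (βF/(2*δ)) with hr_def
  have hr0 : 0 < r := Real.rpow_pos_of_pos hh _
  have hr1 : r ≤ 1 := Real.rpow_le_one hh.le h1 (by positivity)
  have hhr : h ≤ r := by
    calc h = h ^ (1:ℝ) := (Real.rpow_one h).symm
    _ ≤ h ^ (βF/(2*δ)) := Real.rpow_le_rpow_of_exponent_ge hh h1 (by
        rw [div_le_one (by positivity)]; linarith)
  have hrδ : r ^ δ = h ^ (βF/2) := by
    rw [hr_def, ← Real.rpow_mul hh.le]
    congr 1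
    field_simp
  
  -- choice of N
  obtain ⟨N, hN1, hN2⟩ := exists_pow_between (2 / r) (by
    rw [le_div_iff₀ hr0]; linarith)
  have hN1' : (2:ℝ) ≤ 2 ^ N * r := by
    rw [div_le_iff₀ hr0] at hN1; linarith
  have hN2' : (2:ℝ) ^ N * r ≤ 4 := by
    have := (mul_le_mul_of_nonneg_right hN2 hr0.le)
    calc (2:ℝ)^N * r ≤ 2 * (2/r) * r := this
    _ = 4 := by field_simp; ring
  have hNpos : 0 < N := by
    rcases Nat.eq_zero_or_pos N with h0 | h; · exfalso; rw [h0] at hN1'; simp at hN1'; linarith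
    · exact h
  -- the kernel function and integrability
  set φ : ℝ → ℝ := fun w => ‖Kx h X (w - z)‖ with hφ
  have hφnn : ∀ w, 0 ≤ φ w := fun w => norm_nonneg _
  have hφm : StronglyMeasurable φ :=
    ((Kx_sm h X).comp_measurable (measurable_id.sub measurable_const)).norm
  have hφint : ∀ S : Set ℝ, volume S ≠ ⊤ → IntegrableOn φ S volume := by
    intro S hS
    refine Measure.integrableOn_of_bounded (M := C * h ^ (-δ : ℝ)) hS hφm.aestronglyMeasurable
      (Filter.Eventually.of_forall fun w => ?_)
    rw [Real.norm_eq_abs, _root_.abs_of_nonneg (hφnn w)]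
    exact hsup _
  have hYfin : volume Y < ⊤ := (measure_mono hYb).trans_lt measure_Icc_lt_top
  -- split into near and far parts
  set S : Set ℝ := {w : ℝ | |w - z| < r} with hS_def
  have hSmeas : MeasurableSet S := measurableSet_lt (by fun_prop) measurable_const
  have hsplit : ∫ w in Y, φ w = (∫ w in Y ∩ S, φ w) + ∫ w in Y ∩ Sᶜ, φ w := by
    rw [← setIntegral_union]
    · rw [Set.inter_union_compl]
    · exact Set.disjoint_of_subset (Set.inter_subset_right) (Set.inter_subset_right)
        (disjoint_compl_right)
    · exact hY.inter hSmeas.compl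
    · exact hφint _ ((measure_mono Set.inter_subset_left).trans_lt hYfin).ne
    · exact hφint _ ((measure_mono Set.inter_subset_left).trans_lt hYfin).ne
  -- near bound
  have hnear : (∫ w in Y ∩ S, φ w) ≤ 2 ^ δ * C ^ 2 * h ^ (1 - 2*δ + βF/2) := by
    have hsub : Y ∩ S ⊆ Y ∩ Set.Icc (z - r) (z + r) := by
      rintro w ⟨hw1, hw2⟩
      refine ⟨hw1, ?_⟩
      rw [hS_def, Set.mem_setOf_eq, abs_lt] at hw2
      constructor <;> [linarith [hw2.1]; linarith [hw2.2]]
    have hvol : (volume (Y ∩ S)).toReal ≤ C * h ^ (1 - δ) * (2*r) ^ δ := by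
      have h2 : (volume (Y ∩ S)).toReal ≤ (volume (Y ∩ Set.Icc (z - r) (z + r))).toReal := by
        refine ENNReal.toReal_mono ((measure_mono Set.inter_subset_left).trans_lt hYfin).ne
          (measure_mono hsub)
      refine h2.trans ?_
      have := hreg (z - r) (z + r) (by linarith) (by linarith) (by linarith)
      calc (volume (Y ∩ Set.Icc (z - r) (z + r))).toReal
          ≤ C * h ^ (1 - δ) * (z + r - (z - r)) ^ δ := this
        _ = C * h ^ (1 - δ) * (2*r) ^ δ := by ring_nf
    have hstep : (∫ w in Y ∩ S, φ w) ≤ (C * h ^ (-δ : ℝ)) * (volume (Y ∩ S)).toReal := by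
      calc (∫ w in Y ∩ S, φ w) ≤ ∫ _ in Y ∩ S, C * h ^ (-δ : ℝ) := by
            refine setIntegral_mono_on
              (hφint _ ((measure_mono Set.inter_subset_left).trans_lt hYfin).ne)
              (integrableOn_const ((measure_mono Set.inter_subset_left).trans_lt hYfin).ne)
              (hY.inter hSmeas) (fun w _ => hsup _)
        _ = (volume (Y ∩ S)).toReal * (C * h ^ (-δ : ℝ)) := by rw [setIntegral_const, smul_eq_mul, measureReal_def]
        _ = (C * h ^ (-δ : ℝ)) * (volume (Y ∩ S)).toReal := by ring
    have hCh : 0 ≤ C * h ^ (-δ : ℝ) := by positivity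
    calc (∫ w in Y ∩ S, φ w) ≤ (C * h ^ (-δ : ℝ)) * (C * h ^ (1 - δ) * (2*r) ^ δ) :=
          hstep.trans (mul_le_mul_of_nonneg_left hvol hCh)
      _ = 2 ^ δ * C ^ 2 * h ^ (1 - 2*δ + βF/2) := by
          rw [Real.mul_rpow (by norm_num) hr0.le, hrδ]
          rw [show (1 - 2*δ + βF/2 : ℝ) = -δ + ((1 - δ) + βF/2) by ring,
            Real.rpow_add hh, Real.rpow_add hh]
          ring
  
  -- far part: dyadic annuli
  set A : ℕ → Set ℝ := fun j => {w : ℝ | 2^j * r ≤ |w - z| ∧ |w - z| < 2^(j+1) * r} with hA_def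
  have habsm : Measurable fun w : ℝ => |w - z| := (measurable_id.sub measurable_const).abs
  have hAmeas : ∀ j, MeasurableSet (A j) := by
    intro j
    have : A j = {w : ℝ | 2^j * r ≤ |w - z|} ∩ {w : ℝ | |w - z| < 2^(j+1) * r} := by
      ext w; simp [hA_def, Set.mem_setOf_eq, Set.mem_inter_iff]
    rw [this]
    exact (measurableSet_le measurable_const habsm).inter
      (measurableSet_lt habsm measurable_const)
  have hwz1 : ∀ w ∈ Y, |w - z| ≤ 1 := by
    intro w hw
    obtain ⟨hw0, hw1⟩ := hYb hw
    rw [abs_le]; constructor <;> linarith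
  have hcover : Y ∩ Sᶜ ⊆ ⋃ j ∈ Finset.range N, (Y ∩ A j) := by
    rintro w ⟨hwY, hwS⟩
    have hrt : r ≤ |w - z| := by
      simpa [hS_def, not_lt] using hwS
    have ht1 : |w - z| ≤ 1 := hwz1 w hwY
    have hNpow : (2:ℝ)^(N-1+1) = 2^N := by congr 1; omega
    have hex : ∃ m : ℕ, |w - z| < 2^(m+1) * r := ⟨N - 1, by rw [hNpow]; linarith⟩
    have hjspec := Nat.find_spec hex
    have hjlt : Nat.find hex < N := by
      have : Nat.find hex ≤ N - 1 := Nat.find_min' hex (by rw [hNpow]; linarith)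
      omega
    have hjlow : (2:ℝ)^(Nat.find hex) * r ≤ |w - z| := by
      rcases Nat.eq_zero_or_pos (Nat.find hex) with h0 | hj
      · rw [h0]; simpa using hrt
      · have hmin := Nat.find_min hex (Nat.sub_lt hj zero_lt_one)
        push_neg at hmin
        have h2 : (2:ℝ)^(Nat.find hex - 1 + 1) = 2^(Nat.find hex) := by congr 1; omega
        rw [h2] at hmin
        exact hmin
    exact Set.mem_biUnion (Finset.mem_range.2 hjlt) ⟨hwY, hjlow, hjspec⟩
  have hdisj : (↑(Finset.range N) : Set ℕ).Pairwise
      (Function.onFun Disjoint fun j => Y ∩ A j) := by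
    have key : ∀ {a b : ℕ}, a < b → Disjoint (Y ∩ A a) (Y ∩ A b) := by
      intro a b hab
      rw [Set.disjoint_left]
      rintro w ⟨_, _, hw2⟩ ⟨_, hw1', _⟩
      have h2 : (2:ℝ)^(a+1) ≤ 2^b := pow_le_pow_right₀ one_le_two hab
      nlinarith [hr0]
    intro j _ j' _ hne
    rcases hne.lt_or_gt with hlt | hlt
    · exact key hlt
    · exact (key hlt).symm
  have hfar1 : (∫ w in Y ∩ Sᶜ, φ w) ≤ ∑ j ∈ Finset.range N, ∫ w in Y ∩ A j, φ w := by
    have hUsub : (⋃ j ∈ Finset.range N, (Y ∩ A j)) ⊆ Y :=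
      Set.iUnion₂_subset fun j _ => Set.inter_subset_left
    have hU : IntegrableOn φ (⋃ j ∈ Finset.range N, (Y ∩ A j)) volume :=
      hφint _ ((measure_mono hUsub).trans_lt hYfin).ne
    calc (∫ w in Y ∩ Sᶜ, φ w) ≤ ∫ w in ⋃ j ∈ Finset.range N, (Y ∩ A j), φ w :=
          setIntegral_mono_set hU (Filter.Eventually.of_forall hφnn)
            (HasSubset.Subset.eventuallyLE hcover)
      _ = ∑ j ∈ Finset.range N, ∫ w in Y ∩ A j, φ w :=
          integral_biUnion_finset _ (fun j _ => hY.inter (hAmeas j)) hdisj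
            (fun j _ => hφint _ ((measure_mono Set.inter_subset_left).trans_lt hYfin).ne)
  -- per-annulus bound
  have hterm : ∀ j, (∫ w in Y ∩ A j, φ w)
      ≤ C^2 * h^(1 - 2*δ + βF/2) * 4^δ * (((2:ℝ)^e)^j * r^e) := by
    intro j
    have h2j1 : (1:ℝ) ≤ 2^j := one_le_pow₀ one_le_two
    have h2j0 : (0:ℝ) < 2^j * r := by positivity
    set Bj : ℝ := C * h ^ (βF/2 - δ) * ((2:ℝ)^j * r) ^ (-(βF/2) : ℝ) with hBj_def
    have hBj0 : 0 ≤ Bj := by positivity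
    have hpt : ∀ w ∈ Y ∩ A j, φ w ≤ Bj := by
      rintro w ⟨hwY, hw1, hw2⟩
      have habs : h ≤ |w - z| := by nlinarith [hhr]
      have hle2 : |w - z| ≤ 2 := (hwz1 w hwY).trans one_le_two
      refine (hdecay (w - z) habs hle2).trans ?_
      have hmono : |w - z| ^ (-(βF/2) : ℝ) ≤ ((2:ℝ)^j * r) ^ (-(βF/2) : ℝ) :=
        Real.rpow_le_rpow_of_nonpos h2j0 hw1 (by linarith)
      exact mul_le_mul_of_nonneg_left hmono (by positivity)
    have hfin : volume (Y ∩ A j) < ⊤ := (measure_mono Set.inter_subset_left).trans_lt hYfin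
    have hvolj : (volume (Y ∩ A j)).toReal ≤ C * h^(1-δ) * ((2:ℝ)^(j+2) * r)^δ := by
      set s : ℝ := min ((2:ℝ)^(j+1) * r) 1 with hs_def
      have hrs : r ≤ (2:ℝ)^(j+1) * r := le_mul_of_one_le_left hr0.le (one_le_pow₀ one_le_two)
      have hhs : h ≤ s := le_min (hhr.trans hrs) h1
      have hs1 : s ≤ 1 := min_le_right _ _
      have hs0 : 0 < s := lt_of_lt_of_le hh hhs
      have hsub : Y ∩ A j ⊆ Y ∩ Set.Icc (z - s) (z + s) := by
        rintro w ⟨hwY, _, hw2⟩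
        refine ⟨hwY, ?_⟩
        have habs : |w - z| ≤ s := le_min hw2.le (hwz1 w hwY)
        rw [abs_le] at habs
        constructor <;> [linarith [habs.1]; linarith [habs.2]]
      have h2 : (volume (Y ∩ A j)).toReal ≤ (volume (Y ∩ Set.Icc (z - s) (z + s))).toReal :=
        ENNReal.toReal_mono
          (((measure_mono Set.inter_subset_left).trans_lt hYfin)).ne (measure_mono hsub)
      have h3 := hreg (z - s) (z + s) (by linarith) (by linarith) (by linarith)
      have h4 : (z + s - (z - s) : ℝ) = 2*s := by ring
      rw [h4] at h3
      refine (h2.trans h3).trans ?_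
      have h5 : (2*s : ℝ) ≤ 2^(j+2) * r := by
        have : (2:ℝ)^(j+2) = 2 * 2^(j+1) := by rw [pow_succ]; ring
        rw [this]
        have := min_le_left ((2:ℝ)^(j+1) * r) 1
        nlinarith
      have h6 : ((2*s:ℝ)) ^ δ ≤ ((2:ℝ)^(j+2) * r) ^ δ :=
        Real.rpow_le_rpow (by positivity) h5 hδ0.le
      have : (0:ℝ) ≤ C * h^(1-δ) := by positivity
      nlinarith
    have hint : (∫ w in Y ∩ A j, φ w) ≤ Bj * (volume (Y ∩ A j)).toReal := by
      calc (∫ w in Y ∩ A j, φ w) ≤ ∫ _ in Y ∩ A j, Bj :=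
            setIntegral_mono_on (hφint _ hfin.ne)
              (integrableOn_const hfin.ne) (hY.inter (hAmeas j)) hpt
        _ = (volume (Y ∩ A j)).toReal * Bj := by rw [setIntegral_const, smul_eq_mul, measureReal_def]
        _ = Bj * (volume (Y ∩ A j)).toReal := by ring
    refine (hint.trans (mul_le_mul_of_nonneg_left hvolj hBj0)).trans (le_of_eq ?_)
    -- algebraic identity
    rw [hBj_def]
    have e1 : ((2:ℝ)^(j+2) * r)^δ = 4^δ * (((2:ℝ)^j * r)^δ) := by
      rw [show ((2:ℝ)^(j+2) * r) = 4 * ((2:ℝ)^j * r) by rw [pow_add]; ring,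
        Real.mul_rpow (by norm_num) (by positivity)]
    rw [e1]
    have e2 : ((2:ℝ)^j * r) ^ (-(βF/2) : ℝ) * ((2:ℝ)^j * r)^δ = ((2:ℝ)^j * r)^e := by
      rw [← Real.rpow_add h2j0, he_def]
      congr 1
      ring
    have e3 : ((2:ℝ)^j * r)^e = ((2:ℝ)^e)^j * r^e := by
      rw [Real.mul_rpow (by positivity) hr0.le]
      congr 1
      rw [← Real.rpow_natCast (2:ℝ) j, ← Real.rpow_natCast ((2:ℝ)^e) j,
        ← Real.rpow_mul (by norm_num), ← Real.rpow_mul (by norm_num)]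
      congr 1
      ring
    have e4 : h ^ (βF/2 - δ) * h^(1-δ) = h^(1 - 2*δ + βF/2) := by
      rw [← Real.rpow_add hh]
      congr 1
      ring
    calc C * h ^ (βF/2 - δ) * ((2:ℝ)^j * r) ^ (-(βF/2) : ℝ)
          * (C * h^(1-δ) * (4^δ * (((2:ℝ)^j * r)^δ)))
        = C^2 * (h ^ (βF/2 - δ) * h^(1-δ)) * 4^δ
          * (((2:ℝ)^j * r) ^ (-(βF/2) : ℝ) * ((2:ℝ)^j * r)^δ) := by ring
      _ = C^2 * h^(1 - 2*δ + βF/2) * 4^δ * (((2:ℝ)^e)^j * r^e) := by rw [e2, e3, e4]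
  -- sum the geometric series
  have hq1 : (1:ℝ) < 2^e := by
    rw [show (1:ℝ) = (2:ℝ)^(0:ℝ) by simp]
    exact Real.rpow_lt_rpow_of_exponent_lt one_lt_two he
  have hgeom : ∑ j ∈ Finset.range N, ((2:ℝ)^e)^j ≤ ((2:ℝ)^N)^e / ((2:ℝ)^e - 1) := by
    rw [geom_sum_eq hq1.ne']
    have hnum : ((2:ℝ)^e)^N - 1 ≤ ((2:ℝ)^N)^e := by
      have : ((2:ℝ)^e)^N = ((2:ℝ)^N)^e := by
        rw [← Real.rpow_natCast ((2:ℝ)^e) N, ← Real.rpow_natCast (2:ℝ) N,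
          ← Real.rpow_mul (by norm_num), ← Real.rpow_mul (by norm_num), mul_comm]
      rw [this]
      linarith
    have hden : (0:ℝ) < (2:ℝ)^e - 1 := by linarith
    gcongr
  
  have hden : (0:ℝ) < (2:ℝ)^e - 1 := by linarith
  set E : ℝ := 1 - 2*δ + βF/2 with hE_def
  have hfar2 : ∑ j ∈ Finset.range N, ∫ w in Y ∩ A j, φ w
      ≤ (C^2 * h^E * 4^δ * r^e) * ∑ j ∈ Finset.range N, ((2:ℝ)^e)^j := by
    calc ∑ j ∈ Finset.range N, ∫ w in Y ∩ A j, φ w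
        ≤ ∑ j ∈ Finset.range N, C^2 * h^E * 4^δ * (((2:ℝ)^e)^j * r^e) :=
          Finset.sum_le_sum fun j _ => hterm j
      _ = (C^2 * h^E * 4^δ * r^e) * ∑ j ∈ Finset.range N, ((2:ℝ)^e)^j := by
          rw [Finset.mul_sum]
          exact Finset.sum_congr rfl fun j _ => by ring
  have hsum_bound : r^e * ∑ j ∈ Finset.range N, ((2:ℝ)^e)^j ≤ 4^e / ((2:ℝ)^e - 1) := by
    have h2Nr : (2:ℝ)^N ≤ 4 / r := by rw [le_div_iff₀ hr0]; linarith [hN2']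
    have h7 : ((2:ℝ)^N)^e ≤ ((4:ℝ)/r)^e := Real.rpow_le_rpow (by positivity) h2Nr he.le
    have hre : (0:ℝ) ≤ r^e := (Real.rpow_pos_of_pos hr0 e).le
    calc r^e * ∑ j ∈ Finset.range N, ((2:ℝ)^e)^j
        ≤ r^e * (((2:ℝ)^N)^e / ((2:ℝ)^e - 1)) := mul_le_mul_of_nonneg_left hgeom hre
      _ ≤ r^e * (((4:ℝ)/r)^e / ((2:ℝ)^e - 1)) := by
          refine mul_le_mul_of_nonneg_left ?_ hre
          exact div_le_div_of_nonneg_right h7 hden.le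
      _ = (r^e * ((4:ℝ)/r)^e) / ((2:ℝ)^e - 1) := by ring
      _ = 4^e / ((2:ℝ)^e - 1) := by
          rw [← Real.mul_rpow hr0.le (by positivity), mul_div_cancel₀ _ hr0.ne']
  have hfar3 : (∫ w in Y ∩ Sᶜ, φ w) ≤ 4^δ * (4^e / ((2:ℝ)^e - 1)) * (C^2 * h^E) := by
    have hc0 : (0:ℝ) ≤ C^2 * h^E * 4^δ := by positivity
    calc (∫ w in Y ∩ Sᶜ, φ w) ≤ ∑ j ∈ Finset.range N, ∫ w in Y ∩ A j, φ w := hfar1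
      _ ≤ (C^2 * h^E * 4^δ * r^e) * ∑ j ∈ Finset.range N, ((2:ℝ)^e)^j := hfar2
      _ = (C^2 * h^E * 4^δ) * (r^e * ∑ j ∈ Finset.range N, ((2:ℝ)^e)^j) := by ring
      _ ≤ (C^2 * h^E * 4^δ) * (4^e / ((2:ℝ)^e - 1)) :=
          mul_le_mul_of_nonneg_left hsum_bound hc0
      _ = 4^δ * (4^e / ((2:ℝ)^e - 1)) * (C^2 * h^E) := by ring
  rw [hsplit]
  have := add_le_add hnear hfar3
  refine this.trans (le_of_eq ?_)
  ring
/-- FUP from Fourier decay: if `X` satisfies the Fourier decay bound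
`|K_X(y)| ≤ C h^{β_F/2−δ}|y|^{−β_F/2}` for `h ≤ |y| ≤ 2`, `Y` satisfies the regularity
volume bound, and `sup|K_X| ≤ C h^{−δ}`, then
`‖1_X F_h 1_Y‖ ≤ C' h^{1/2 − δ + β_F/4}` with `C'` depending only on `C, δ, β_F`. -/
theorem stmt15 (C δ βF : ℝ) (hC : 0 < C) (hδ0 : 0 < δ) (hδ1 : δ < 1)
    (hβ0 : 0 < βF) (hβδ : βF ≤ δ) :
    ∃ C' : ℝ, 0 < C' ∧
      ∀ h : ℝ, 0 < h → h ≤ 1 →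
      ∀ X Y : Set ℝ, MeasurableSet X → MeasurableSet Y →
        X ⊆ Set.Icc 0 1 → Y ⊆ Set.Icc 0 1 →
        (∀ y : ℝ, h ≤ |y| → |y| ≤ 2 →
          ‖Kx h X y‖ ≤ C * h ^ (βF/2 - δ) * |y| ^ (-(βF/2) : ℝ)) →
        (∀ a b : ℝ, a < b → h ≤ b - a → b - a ≤ 2 →
          (volume (Y ∩ Set.Icc a b)).toReal ≤ C * h ^ (1 - δ) * (b - a) ^ δ) →
        (∀ y : ℝ, ‖Kx h X y‖ ≤ C * h ^ (-δ : ℝ)) →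
        ∀ f : ℝ → ℂ, MemLp f 2 volume →
          eLpNorm (X.indicator (semiFT h (Y.indicator f))) 2 volume ≤
            ENNReal.ofReal (C' * h ^ (1/2 - δ + βF/4 : ℝ)) * eLpNorm f 2 volume := by
  classical
  set K₀ : ℝ := (2:ℝ) ^ δ + 4 ^ δ * 4 ^ (δ - βF/2) / ((2:ℝ) ^ (δ - βF/2) - 1) with hK₀
  have hq1 : (1:ℝ) < (2:ℝ) ^ (δ - βF/2) := by
    rw [show (1:ℝ) = (2:ℝ)^(0:ℝ) by simp]
    exact Real.rpow_lt_rpow_of_exponent_lt one_lt_two (by linarith)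
  have hK₀pos : 0 < K₀ := by
    have h1 : (0:ℝ) < (2:ℝ)^δ := Real.rpow_pos_of_pos two_pos δ
    have h2 : (0:ℝ) ≤ 4 ^ δ * 4 ^ (δ - βF/2) / ((2:ℝ) ^ (δ - βF/2) - 1) := by
      apply div_nonneg _ (by linarith)
      positivity
    rw [hK₀]; linarith
  refine ⟨Real.sqrt K₀ * C, by positivity, ?_⟩
  intro h hh h1 X Y hX hY hXb hYb hdecayA hreg hsupA f hf
  set E : ℝ := 1 - 2*δ + βF/2 with hE
  -- norms instead of Complex.abs
  have hdecay : ∀ y : ℝ, h ≤ |y| → |y| ≤ 2 →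
      ‖Kx h X y‖ ≤ C * h ^ (βF/2 - δ) * |y| ^ (-(βF/2) : ℝ) := by
    intro y hy1 hy2; exact hdecayA y hy1 hy2
  have hsup : ∀ y : ℝ, ‖Kx h X y‖ ≤ C * h ^ (-δ : ℝ) := by
    intro y; exact hsupA y
  -- measurable representative
  set f₁ : ℝ → ℂ := hf.1.mk f with hf₁def
  have hf₁m : StronglyMeasurable f₁ := hf.1.stronglyMeasurable_mk
  have hae : f =ᵐ[volume] f₁ := hf.1.ae_eq_mk
  have hf₁ : MemLp f₁ 2 volume := hf.ae_eq hae
  have hind : Y.indicator f =ᵐ[volume] Y.indicator f₁ :=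
    hae.mono fun x hx => by by_cases hxY : x ∈ Y <;> simp [Set.indicator, hxY, hx]
  have hFT : semiFT h (Y.indicator f) = semiFT h (Y.indicator f₁) := by
    funext ξ
    unfold semiFT
    congr 1
    exact integral_congr_ae (hind.mono fun x hx => by dsimp only; rw [hx])
  rw [hFT, eLpNorm_congr_ae hae]
  set g : ℝ → ℂ := Y.indicator f₁ with hgdef
  have hgm : StronglyMeasurable g := hf₁m.indicator hY
  have hYfin : volume Y < ⊤ := (measure_mono hYb).trans_lt measure_Icc_lt_top
  haveI : IsFiniteMeasure ((volume : Measure ℝ).restrict Y) := ⟨by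
    rw [Measure.restrict_apply_univ]; exact hYfin⟩
  have hgi : Integrable g volume := by
    rw [hgdef, integrable_indicator_iff hY]
    exact ((hf₁.restrict Y).integrable (by norm_num) :)
  set M : ℝ := K₀ * C ^ 2 * h ^ E with hM
  have hM0 : 0 ≤ M := by
    have : (0:ℝ) < h ^ E := Real.rpow_pos_of_pos hh E
    positivity
  have HM : ∀ z ∈ Y, ∫ w in Y, ‖Kx h X (w - z)‖ ≤ M :=
    fun z hz => Mbound C δ βF h hC hδ0 hδ1 hβ0 hβδ hh h1 X Y hY hYb hdecay hreg hsup z (hYb hz)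
  -- the main quadratic-form bound
  have key : ∫ ξ in X, ‖semiFT h g ξ‖ ^ 2 ≤ M * ∫ x, ‖g x‖ ^ 2 := by
    have h1c : ∫ ξ in X, semiFT h g ξ * (starRingEnd ℂ) (semiFT h g ξ)
        = (((∫ ξ in X, ‖semiFT h g ξ‖ ^ 2 : ℝ)) : ℂ) := by
      calc ∫ ξ in X, semiFT h g ξ * (starRingEnd ℂ) (semiFT h g ξ)
          = ∫ ξ in X, ((‖semiFT h g ξ‖ ^ 2 : ℝ) : ℂ) := by
            refine integral_congr_ae (Filter.Eventually.of_forall fun ξ => ?_)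
            dsimp only
            rw [Complex.mul_conj]
            norm_cast
            rw [Complex.normSq_eq_norm_sq]
        _ = (((∫ ξ in X, ‖semiFT h g ξ‖ ^ 2 : ℝ)) : ℂ) := integral_ofReal
    have h2c : ∫ ξ in X, ‖semiFT h g ξ‖ ^ 2
        = ‖∫ ξ in X, semiFT h g ξ * (starRingEnd ℂ) (semiFT h g ξ)‖ := by
      rw [h1c, Complex.norm_real, Real.norm_eq_abs,
        _root_.abs_of_nonneg (integral_nonneg fun ξ => by positivity)]
    rw [h2c, kernel_id h hh X hX hXb g hgm hgi]
    exact schur_bound h X Y hY hYb f₁ hf₁m hf₁ M (C * h ^ (-δ:ℝ)) hM0 hsup HM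
  -- compare ∫‖g‖² with ∫‖f₁‖²
  have hf₁sq : Integrable (fun x => ‖f₁ x‖ ^ 2) volume := by
    simpa [Real.rpow_natCast] using
      hf₁.integrable_norm_rpow two_ne_zero ENNReal.ofNat_ne_top
  have hgsq : Integrable (fun x => ‖g x‖ ^ 2) volume := by
    refine (hf₁sq.indicator hY).congr (Filter.Eventually.of_forall fun x => ?_)
    by_cases hx : x ∈ Y <;> simp [hgdef, Set.indicator, hx]
  have hgf : ∫ x, ‖g x‖ ^ 2 ≤ ∫ x, ‖f₁ x‖ ^ 2 := by
    refine integral_mono hgsq hf₁sq fun x => ?_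
    by_cases hx : x ∈ Y <;> simp [hgdef, Set.indicator, hx] <;> positivity
  have hIf0 : 0 ≤ ∫ x, ‖f₁ x‖ ^ 2 := integral_nonneg fun x => by positivity
  -- bound on the eLpNorm of the indicator
  set F : ℝ → ℂ := semiFT h g with hF
  have hFm : StronglyMeasurable F := semiFT_sm h g hgm
  have hXfin : volume X < ⊤ := (measure_mono hXb).trans_lt measure_Icc_lt_top
  have hFsqInt : IntegrableOn (fun ξ => ‖F ξ‖ ^ 2) X volume := by
    have hexp1 : ∀ (x ξ : ℝ), ‖Complex.exp (-(Complex.I * x * ξ) / h)‖ = 1 := by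
      intro x ξ
      rw [Complex.norm_exp]
      have : ((-(Complex.I * x * ξ) / h : ℂ)).re = 0 := by simp [Complex.div_re]
      rw [this, Real.exp_zero]
    have hDb : ∀ ξ, ‖F ξ‖ ≤ ((2 * Real.pi * h) ^ (-(1/2) : ℝ) : ℝ) * ∫ x, ‖g x‖ := by
      intro ξ
      rw [hF]
      unfold semiFT
      rw [norm_mul, Complex.norm_real, Real.norm_eq_abs,
        _root_.abs_of_nonneg (Real.rpow_nonneg (by positivity) _)]
      refine mul_le_mul_of_nonneg_left ?_ (Real.rpow_nonneg (by positivity) _)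
      calc ‖∫ x : ℝ, Complex.exp (-(Complex.I * x * ξ) / h) * g x‖
          ≤ ∫ x : ℝ, ‖Complex.exp (-(Complex.I * x * ξ) / h) * g x‖ :=
            norm_integral_le_integral_norm _
        _ = ∫ x : ℝ, ‖g x‖ := by
            refine integral_congr_ae (Filter.Eventually.of_forall fun x => ?_)
            dsimp only
            rw [norm_mul, hexp1, one_mul]
    refine Measure.integrableOn_of_bounded (M := (((2 * Real.pi * h) ^ (-(1/2) : ℝ) : ℝ)
        * ∫ x, ‖g x‖) ^ 2) hXfin.ne
      ((hFm.norm.pow 2).aestronglyMeasurable)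
      (Filter.Eventually.of_forall fun ξ => ?_)
    rw [Real.norm_eq_abs, _root_.abs_of_nonneg (by positivity)]
    have := hDb ξ
    nlinarith [norm_nonneg (F ξ)]
  -- chain of estimates in ℝ≥0∞
  have hLHS : eLpNorm (X.indicator F) 2 volume
      ≤ ENNReal.ofReal ((∫ ξ in X, ‖F ξ‖ ^ 2) ^ ((1:ℝ)/2)) := by
    rw [eLpNorm_eq_lintegral_rpow_enorm_toReal two_ne_zero ENNReal.ofNat_ne_top]
    have htoReal : (2 : ℝ≥0∞).toReal = (2:ℝ) := by simp
    rw [htoReal]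
    have hpt : ∀ x : ℝ, ‖X.indicator F x‖ₑ ^ (2:ℝ)
        = X.indicator (fun ξ => ENNReal.ofReal (‖F ξ‖ ^ 2)) x := by
      intro x
      by_cases hx : x ∈ X
      · rw [Set.indicator_of_mem hx, Set.indicator_of_mem hx]
        rw [← ofReal_norm,
          ENNReal.ofReal_rpow_of_nonneg (norm_nonneg _) (by norm_num : (0:ℝ) ≤ 2)]
        congr 1
        rw [← Real.rpow_natCast ‖F x‖ 2]
        norm_num
      · rw [Set.indicator_of_notMem hx, Set.indicator_of_notMem hx]
        simp [ENNReal.zero_rpow_of_pos]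
    rw [lintegral_congr hpt, lintegral_indicator hX,
      ← ofReal_integral_eq_lintegral_ofReal hFsqInt
        (Filter.Eventually.of_forall fun ξ => by positivity)]
    rw [← ENNReal.ofReal_rpow_of_nonneg (integral_nonneg fun ξ => by positivity) (by norm_num)]
  have hRHS : ENNReal.ofReal ((∫ x, ‖f₁ x‖ ^ 2) ^ ((1:ℝ)/2)) = eLpNorm f₁ 2 volume := by
    rw [hf₁.eLpNorm_eq_integral_rpow_norm two_ne_zero ENNReal.ofNat_ne_top]
    congr 1
    · rw [show ((2:ℝ≥0∞).toReal) = (2:ℝ) by simp]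
      congr 1
      · refine integral_congr_ae (Filter.Eventually.of_forall fun x => ?_)
        dsimp only
        rw [← Real.rpow_natCast ‖f₁ x‖ 2]
        norm_num
      · norm_num
  -- combine
  refine hLHS.trans ?_
  have hmid : (∫ ξ in X, ‖F ξ‖ ^ 2) ^ ((1:ℝ)/2)
      ≤ (Real.sqrt K₀ * C * h ^ (1/2 - δ + βF/4 : ℝ)) * (∫ x, ‖f₁ x‖ ^ 2) ^ ((1:ℝ)/2) := by
    have hstep : (∫ ξ in X, ‖F ξ‖ ^ 2) ≤ M * ∫ x, ‖f₁ x‖ ^ 2 :=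
      key.trans (mul_le_mul_of_nonneg_left hgf hM0)
    have h0 : 0 ≤ ∫ ξ in X, ‖F ξ‖ ^ 2 := integral_nonneg fun ξ => by positivity
    calc (∫ ξ in X, ‖F ξ‖ ^ 2) ^ ((1:ℝ)/2)
        ≤ (M * ∫ x, ‖f₁ x‖ ^ 2) ^ ((1:ℝ)/2) := Real.rpow_le_rpow h0 hstep (by norm_num)
      _ = M ^ ((1:ℝ)/2) * (∫ x, ‖f₁ x‖ ^ 2) ^ ((1:ℝ)/2) :=
          Real.mul_rpow hM0 hIf0
      _ = (Real.sqrt K₀ * C * h ^ (1/2 - δ + βF/4 : ℝ)) * (∫ x, ‖f₁ x‖ ^ 2) ^ ((1:ℝ)/2) := by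
          congr 1
          rw [hM, Real.mul_rpow (by positivity) (Real.rpow_pos_of_pos hh E).le,
            Real.mul_rpow hK₀pos.le (by positivity),
            ← Real.rpow_natCast C 2, ← Real.rpow_mul hC.le, ← Real.rpow_mul hh.le,
            Real.sqrt_eq_rpow,
            show ((2:ℕ):ℝ) * (1/2) = 1 by norm_num, Real.rpow_one,
            show E * (1/2) = 1/2 - δ + βF/4 by rw [hE]; ring]
  calc ENNReal.ofReal ((∫ ξ in X, ‖F ξ‖ ^ 2) ^ ((1:ℝ)/2))
      ≤ ENNReal.ofReal ((Real.sqrt K₀ * C * h ^ (1/2 - δ + βF/4 : ℝ))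
          * (∫ x, ‖f₁ x‖ ^ 2) ^ ((1:ℝ)/2)) := ENNReal.ofReal_le_ofReal hmid
    _ = ENNReal.ofReal (Real.sqrt K₀ * C * h ^ (1/2 - δ + βF/4 : ℝ))
          * ENNReal.ofReal ((∫ x, ‖f₁ x‖ ^ 2) ^ ((1:ℝ)/2)) :=
        ENNReal.ofReal_mul (by positivity)
    _ = ENNReal.ofReal (Real.sqrt K₀ * C * h ^ (1/2 - δ + βF/4 : ℝ)) * eLpNorm f₁ 2 volume := by
        rw [hRHS]
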